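/- arXiv:1406.7392 — 3 statements merged into one kernel-verified Lean document; each statement's English description precedes it below -/
import Mathlib

section
/- Let Λ_{Z₂}[t₁,...,t_k] ⊗ Z₂[K] carry the differential d_α defined by d_α(t_i) = Σ_{v_j ∈ α_i} v_j and d_α(v_σ) = Σ_{σ ⊂ ω, dim ω = dim σ + 1, I_α(ω) = I_α(σ)} v_ω (over Z₂, so signs can be ignored). Then d_α ∘ d_α = 0. -/
open Finset

/-- The free `ℤ₂`-module spanned by the multiplicative generators of
`Λ_{ℤ₂}[t₁,…,t_k] ⊗ ℤ₂[K]`: the exterior generators `t_i` (indexed by `Sum.inl i`)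
and the face-ring generators `v_σ` (indexed by `Sum.inr σ`, `σ` a simplex of `K`). -/
abbrev GenMod (V : Type*) (k : ℕ) := (Fin k ⊕ Finset V) →₀ ZMod 2

/-- The differential `d_α` on generators (over `ℤ₂`, so all signs are ignored):
`d_α(t_i) = Σ_{v ∈ α_i} v_{{v}}`, and
`d_α(v_σ) = Σ_{σ ⊂ ω ∈ K, dim ω = dim σ + 1, I_α(ω) = I_α(σ)} v_ω`,
where the partition `α` is encoded by `p : V → Fin k` and `I_α(σ) = p '' σ`. -/
noncomputable def dAlphaGen {V : Type*} [Fintype V] [DecidableEq V] {k : ℕ}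
    (K : Finset (Finset V)) (p : V → Fin k) :
    (Fin k ⊕ Finset V) → GenMod V k
  | Sum.inl i => ∑ v ∈ Finset.univ.filter (fun v => p v = i),
      Finsupp.single (Sum.inr {v}) 1
  | Sum.inr σ => ∑ v ∈ Finset.univ.filter
      (fun v => v ∉ σ ∧ insert v σ ∈ K ∧ (insert v σ).image p = σ.image p),
      Finsupp.single (Sum.inr (insert v σ)) 1

/-- The `ℤ₂`-linear extension of `d_α` to the span of the generators. -/
noncomputable def dAlpha {V : Type*} [Fintype V] [DecidableEq V] {k : ℕ}
    (K : Finset (Finset V)) (p : V → Fin k) :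
    GenMod V k →ₗ[ZMod 2] GenMod V k :=
  Finsupp.linearCombination (ZMod 2) (dAlphaGen K p)

lemma dAlpha_single {V : Type*} [Fintype V] [DecidableEq V] {k : ℕ}
    (K : Finset (Finset V)) (p : V → Fin k) (a : Fin k ⊕ Finset V) (c : ZMod 2) :
    dAlpha K p (Finsupp.single a c) = c • dAlphaGen K p a := by
  simp [dAlpha, Finsupp.linearCombination_single]

lemma single_add_single_self {V : Type*} {k : ℕ} (a : Fin k ⊕ Finset V) :
    (Finsupp.single a 1 : GenMod V k) + Finsupp.single a 1 = 0 := by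
  rw [← Finsupp.single_add]
  have h : (1 + 1 : ZMod 2) = 0 := rfl
  rw [h, Finsupp.single_zero]

lemma dd_gen {V : Type*} [Fintype V] [DecidableEq V] {k : ℕ}
    (K : Finset (Finset V))
    (hsub : ∀ σ ∈ K, ∀ τ ⊆ σ, τ ∈ K)
    (p : V → Fin k) (a : Fin k ⊕ Finset V) :
    dAlpha K p (dAlphaGen K p a) = 0 := by
  cases a with
  | inl i =>
    rw [dAlphaGen, map_sum]
    simp only [dAlpha_single, one_smul, dAlphaGen]
    rw [Finset.sum_sigma']
    refine Finset.sum_involution (fun x _ => ⟨x.2, x.1⟩) ?_ ?_ ?_ ?_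
    · intro x hx
      simp only [Finset.mem_sigma, Finset.mem_filter, Finset.mem_univ, true_and] at hx
      obtain ⟨hv, hw, hwK, hwI⟩ := hx
      have : insert x.2 {x.1} = insert x.1 ({x.2} : Finset V) :=
        Finset.pair_comm _ _
      rw [this]
      exact single_add_single_self _
    · intro x hx _
      simp only [Finset.mem_sigma, Finset.mem_filter, Finset.mem_univ, true_and] at hx
      intro h
      apply hx.2.1
      have : x.2 = x.1 := congrArg Sigma.fst h
      simp [this]
    · intro x hx
      simp only [Finset.mem_sigma, Finset.mem_filter, Finset.mem_univ, true_and] at hx ⊢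
      obtain ⟨hv, hw, hwK, hwI⟩ := hx
      have hne : x.2 ≠ x.1 := by simpa using hw
      have hcomm : insert x.2 {x.1} = insert x.1 ({x.2} : Finset V) :=
        Finset.pair_comm _ _
      have hp2 : p x.2 = i := by
        have : p x.2 ∈ (insert x.2 ({x.1} : Finset V)).image p :=
          Finset.mem_image_of_mem p (Finset.mem_insert_self _ _)
        rw [hwI] at this
        simp only [Finset.image_singleton, Finset.mem_singleton] at this
        rw [this, hv]
      refine ⟨hp2, by simpa using hne.symm, by rwa [← hcomm], ?_⟩
      rw [← hcomm, hwI]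
      simp [hv, hp2]
    · intro x hx
      rfl
  | inr σ =>
    rw [dAlphaGen, map_sum]
    simp only [dAlpha_single, one_smul, dAlphaGen]
    rw [Finset.sum_sigma']
    refine Finset.sum_involution (fun x _ => ⟨x.2, x.1⟩) ?_ ?_ ?_ ?_
    · intro x hx
      simp only [Finset.mem_sigma, Finset.mem_filter, Finset.mem_univ, true_and] at hx
      have : insert x.2 (insert x.1 σ) = insert x.1 (insert x.2 σ) :=
        Finset.insert_comm _ _ _
      rw [this]
      exact single_add_single_self _
    · intro x hx _
      simp only [Finset.mem_sigma, Finset.mem_filter, Finset.mem_univ, true_and] at hx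
      intro h
      have : x.2 = x.1 := congrArg Sigma.fst h
      exact hx.2.1 (this ▸ Finset.mem_insert_self x.1 σ)
    · intro x hx
      simp only [Finset.mem_sigma, Finset.mem_filter, Finset.mem_univ, true_and] at hx ⊢
      obtain ⟨⟨hv, hvK, hvI⟩, hw, hwK, hwI⟩ := hx
      have hne : x.2 ≠ x.1 := fun h => hw (h ▸ Finset.mem_insert_self x.1 σ)
      have hwσ : x.2 ∉ σ := fun h => hw (Finset.mem_insert_of_mem h)
      have hcomm : insert x.2 (insert x.1 σ) = insert x.1 (insert x.2 σ) :=
        Finset.insert_comm _ _ _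
      have hpw : p x.2 ∈ σ.image p := by
        have : p x.2 ∈ (insert x.2 (insert x.1 σ)).image p :=
          Finset.mem_image_of_mem p (Finset.mem_insert_self _ _)
        rwa [hwI, hvI] at this
      have hIw : (insert x.2 σ).image p = σ.image p := by
        rw [Finset.image_insert, Finset.insert_eq_self.mpr hpw]
      refine ⟨⟨hwσ, hsub _ hwK _ ?_, hIw⟩, ?_, by rwa [← hcomm], ?_⟩
      · intro y hy
        rcases Finset.mem_insert.mp hy with h | h
        · exact h ▸ Finset.mem_insert_self _ _
        · exact Finset.mem_insert_of_mem (Finset.mem_insert_of_mem h)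
      · simp only [Finset.mem_insert, not_or]
        exact ⟨hne.symm, hv⟩
      · rw [← hcomm, hwI, hvI, hIw]
    · intro x hx
      rfl

/-- For a finite simplicial complex `K` (closed under subsets, with all
vertices of `V` as vertices of `K`) with vertex partition `α` encoded by the
surjective map `p : V → Fin k`, the differential `d_α` on
`Λ_{ℤ₂}[t₁,…,t_k] ⊗ ℤ₂[K]`, given on generators by
`d_α(t_i) = Σ_{v_j ∈ α_i} v_j` and
`d_α(v_σ) = Σ_{σ ⊂ ω, dim ω = dim σ + 1, I_α(ω) = I_α(σ)} v_ω`
(over `ℤ₂`, so signs can be ignored), satisfies `d_α ∘ d_α = 0`. -/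
theorem stmt6 {V : Type*} [Fintype V] [DecidableEq V] {k : ℕ}
    (K : Finset (Finset V))
    (hsub : ∀ σ ∈ K, ∀ τ ⊆ σ, τ ∈ K)
    (hvert : ∀ v : V, {v} ∈ K)
    (p : V → Fin k) (hp : Function.Surjective p) :
    ∀ m : GenMod V k, dAlpha K p (dAlpha K p m) = 0 := by
  intro m
  have h : (dAlpha K p) ∘ₗ (dAlpha K p) = 0 := by
    apply Finsupp.lhom_ext
    intro a b
    simp [LinearMap.comp_apply, dAlpha_single, dd_gen K hsub p a]
  simpa using LinearMap.congr_fun h m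
end

section
/- For each L ⊂ [k], the map φ^L_α sending the dual basis element σ* of the simplicial cochain complex C*(K_{α,L}; k) (augmented, with σ ranging over all simplices of K_{α,L} including the empty simplex) to x^{Φ^{L∖I_α(σ)}_σ} is an isomorphism of cochain complexes onto C^{*,L}(X(K,λ_α); k), shifting degree by one: a simplicial cochain of degree q−1 maps to a cellular cochain of dimension q = rank(σ). -/
open Finset

/-- The incidence sign `ε(σ, ω)` for `ω = insert v σ`, `v ∉ σ`. -/
def epsSign {V : Type*} [DecidableEq V] [LinearOrder V] (σ : Finset V) (v : V) : ℤ :=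
  (-1) ^ (σ.filter (fun u => u < v)).card

/-- The differential of the augmented simplicial cochain complex of the subcomplex
`K_{α,L} = {σ ∈ K : I_α(σ) ⊆ L}`:
`d(σ*) = Σ_{σ ⊂ ω ∈ K_{α,L}, dim ω = dim σ + 1} ε(σ,ω) ω*`. -/
noncomputable def dSimp {V : Type*} [Fintype V] [DecidableEq V] [LinearOrder V]
    {k : ℕ} (K : Finset (Finset V)) (p : V → Fin k) (L : Finset (Fin k))
    (σ : Finset V) : Finset V →₀ ℤ :=
  ∑ v ∈ Finset.univ.filter
      (fun v => v ∉ σ ∧ insert v σ ∈ K ∧ (insert v σ).image p ⊆ L),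
    epsSign σ v • Finsupp.single (insert v σ) (1 : ℤ)

/-- The cellular cochain differential of `X(K, λ_α)` on the basis cochain
`x^{Φ^J_σ}` indexed by `b = (σ, J)`:
`d(x^{Φ^J_σ}) = Σ_{σ⊂ω∈K, dim ω = dim σ+1, I_α(ω) ⊆ I_α(σ)∪J}
  ε(σ,ω) · x^{Φ^{(I_α(σ)∪J) \ I_α(ω)}_ω}`. -/
noncomputable def dCellReal {V : Type*} [Fintype V] [DecidableEq V] [LinearOrder V]
    {k : ℕ} (K : Finset (Finset V)) (p : V → Fin k)
    (b : Finset V × Finset (Fin k)) : (Finset V × Finset (Fin k)) →₀ ℤ :=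
  ∑ v ∈ Finset.univ.filter
      (fun v => v ∉ b.1 ∧ insert v b.1 ∈ K ∧ p v ∈ b.1.image p ∪ b.2),
    epsSign b.1 v •
      Finsupp.single (insert v b.1, (b.1.image p ∪ b.2) \ (insert v b.1).image p) (1 : ℤ)

/-- For each `L ⊆ [k]`, the map `φ^L_α` sending the dual basis
cochain `σ*` of the augmented simplicial cochain complex of
`K_{α,L}` (with `σ` ranging over all simplices of `K_{α,L}`, including the empty
simplex) to `x^{Φ^{L∖I_α(σ)}_σ}` is an isomorphism of cochain complexes onto
`C^{*,L}(X(K,λ_α))`, shifting degree by one: a simplicial cochain of degree `q-1`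
maps to a cellular cochain of dimension `q = rank σ`.  Concretely, writing
`g(σ) = (σ, L \ I_α(σ))` on basis indices:
(i) `g` is a bijection from the simplices of `K_{α,L}` onto the basis
`{(σ,J) : σ ∈ K, J ∩ I_α(σ) = ∅, I_α(σ) ∪ J = L}` of `C^{*,L}(X(K,λ_α))`;
(ii) `φ^L_α = Finsupp.mapDomain g` intertwines the two differentials;
(iii) the image cell of a simplex `σ` has dimension `rank σ = |σ|` (one more
than the simplicial degree `|σ| - 1`). -/
theorem stmt14 {V : Type*} [Fintype V] [DecidableEq V] [LinearOrder V] {k : ℕ}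
    (K : Finset (Finset V))
    (hsub : ∀ σ ∈ K, ∀ τ ⊆ σ, τ ∈ K)
    (p : V → Fin k) (hp : Function.Surjective p) (L : Finset (Fin k)) :
    Set.BijOn (fun σ : Finset V => (σ, L \ σ.image p))
        {σ : Finset V | σ ∈ K ∧ σ.image p ⊆ L}
        {b : Finset V × Finset (Fin k) |
          b.1 ∈ K ∧ Disjoint b.2 (b.1.image p) ∧ b.1.image p ∪ b.2 = L} ∧
      (∀ σ : Finset V, σ ∈ K → σ.image p ⊆ L →
        Finsupp.mapDomain (fun σ : Finset V => (σ, L \ σ.image p)) (dSimp K p L σ) =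
          dCellReal K p (σ, L \ σ.image p)) ∧
      (∀ σ : Finset V, σ ∈ K → σ.image p ⊆ L →
        ((σ, L \ σ.image p) : Finset V × Finset (Fin k)).1.card = σ.card) := by
  refine ⟨⟨?_, ?_, ?_⟩, ?_, ?_⟩
  · rintro σ ⟨hK, hL⟩
    exact ⟨hK, Finset.sdiff_disjoint, Finset.union_sdiff_of_subset hL⟩
  · intro σ _ τ _ h
    exact congrArg Prod.fst h
  · rintro ⟨σ, J⟩ ⟨hK, hdisj, hunion⟩
    refine ⟨σ, ⟨hK, hunion ▸ Finset.subset_union_left⟩, ?_⟩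
    simp only [Prod.mk.injEq, true_and]
    rw [← hunion, Finset.union_sdiff_cancel_left hdisj.symm]
  · intro σ hK hL
    rw [dSimp, dCellReal, Finsupp.mapDomain_finset_sum]
    apply Finset.sum_congr
    · ext v
      simp only [mem_filter, mem_univ, true_and, Finset.image_insert,
        Finset.union_sdiff_of_subset hL, Finset.insert_subset_iff]
      tauto
    · intro v hv
      rw [Finsupp.mapDomain_smul, Finsupp.mapDomain_single,
        Finset.union_sdiff_of_subset hL]
  · intro σ _ _
    rfl
end

section
/- For each L ⊂ [k], the map φ̂^L_α sending σ* to κ(σ,L)·y^{Φ^{L∖I_α(σ)}_σ} is a cochain complex isomorphism from the augmented simplicial cochain complex of K_{α,L} onto C^{*,L}(X(K,Λ_α); k); in particular κ(σ,L)·d(y^{Φ^{L∖I_α(σ)}_σ}) = Σ_{σ⊂ω∈K_{α,L}, dim ω = dim σ+1} κ(ω,L) ε(σ,ω) y^{Φ^{L∖I_α(ω)}_ω}. -/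
open Finset

/-- `κ(i, L) = (-1)^{|{j ∈ L : j < i}|}`. -/
def kappaIdx {k : ℕ} (i : Fin k) (L : Finset (Fin k)) : ℤ :=
  (-1) ^ (L.filter (fun j => j < i)).card

/-- `κ(σ, L) = Π_{v ∈ σ} κ(i_α(v), L)`, where `i_α(v) = p v`. -/
def kappaSimp {V : Type*} [DecidableEq V] {k : ℕ} (p : V → Fin k)
    (σ : Finset V) (L : Finset (Fin k)) : ℤ :=
  ∏ v ∈ σ, kappaIdx (p v) L

/-- The cellular cochain differential of `X(K, Λ_α)` on the basis cochain
`y^{Φ^J_σ}` indexed by `b = (σ, J)`: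
`d(y^{Φ^J_σ}) = Σ_{σ⊂ω∈K, dim ω = dim σ+1, I_α(ω) ⊆ I_α(σ)∪J}
  κ(i_α(ω∖σ), I_α(σ)∪J) · ε(σ,ω) · y^{Φ^{(I_α(σ)∪J) \ I_α(ω)}_ω}`,
where `ω∖σ` is the vertex `v` of `ω` not in `σ`. -/
noncomputable def dCellCx {V : Type*} [Fintype V] [DecidableEq V] [LinearOrder V]
    {k : ℕ} (K : Finset (Finset V)) (p : V → Fin k)
    (b : Finset V × Finset (Fin k)) : (Finset V × Finset (Fin k)) →₀ ℤ :=
  ∑ v ∈ Finset.univ.filter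
      (fun v => v ∉ b.1 ∧ insert v b.1 ∈ K ∧ p v ∈ b.1.image p ∪ b.2),
    (kappaIdx (p v) (b.1.image p ∪ b.2) * epsSign b.1 v) •
      Finsupp.single (insert v b.1, (b.1.image p ∪ b.2) \ (insert v b.1).image p) (1 : ℤ)

/-- For each `L ⊆ [k]`, the map `φ̂^L_α` sending `σ*` to
`κ(σ,L) · y^{Φ^{L∖I_α(σ)}_σ}` is a cochain complex isomorphism from the augmented
simplicial cochain complex of `K_{α,L}` onto `C^{*,L}(X(K,Λ_α))`.  Concretely,
writing `g(σ) = (σ, L \ I_α(σ))` on basis indices: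
(i) `g` is a bijection from the simplices of `K_{α,L}` onto the basis
`{(σ,J) : σ ∈ K, J ∩ I_α(σ) = ∅, I_α(σ) ∪ J = L}`;
(ii) the chain-map identity holds — in particular
`κ(σ,L) · d(y^{Φ^{L∖I_α(σ)}_σ})
  = Σ_{σ⊂ω∈K_{α,L}, dim ω = dim σ+1} κ(ω,L) · ε(σ,ω) · y^{Φ^{L∖I_α(ω)}_ω}`. -/
theorem stmt15 {V : Type*} [Fintype V] [DecidableEq V] [LinearOrder V] {k : ℕ}
    (K : Finset (Finset V))
    (hsub : ∀ σ ∈ K, ∀ τ ⊆ σ, τ ∈ K)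
    (p : V → Fin k) (hp : Function.Surjective p) (L : Finset (Fin k)) :
    Set.BijOn (fun σ : Finset V => (σ, L \ σ.image p))
        {σ : Finset V | σ ∈ K ∧ σ.image p ⊆ L}
        {b : Finset V × Finset (Fin k) |
          b.1 ∈ K ∧ Disjoint b.2 (b.1.image p) ∧ b.1.image p ∪ b.2 = L} ∧
      ∀ σ : Finset V, σ ∈ K → σ.image p ⊆ L →
        kappaSimp p σ L • dCellCx K p (σ, L \ σ.image p) =
          ∑ v ∈ Finset.univ.filter
              (fun v => v ∉ σ ∧ insert v σ ∈ K ∧ (insert v σ).image p ⊆ L),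
            (kappaSimp p (insert v σ) L * epsSign σ v) •
              Finsupp.single
                ((insert v σ, L \ (insert v σ).image p) :
                  Finset V × Finset (Fin k)) (1 : ℤ) := by
  constructor
  · refine ⟨?_, ?_, ?_⟩
    · rintro σ ⟨hσK, hσL⟩
      exact ⟨hσK, Finset.sdiff_disjoint, by
        simp [Finset.union_sdiff_of_subset hσL]⟩
    · rintro σ _ τ _ h
      exact congrArg Prod.fst h
    · rintro ⟨σ, J⟩ ⟨hK, hdisj, hun⟩
      refine ⟨σ, ⟨hK, hun ▸ Finset.subset_union_left⟩, ?_⟩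
      simp only [Prod.mk.injEq]
      exact ⟨trivial, by rw [← hun, Finset.union_sdiff_cancel_left hdisj.symm]⟩
  · intro σ hσK hσL
    have hU : σ.image p ∪ (L \ σ.image p) = L := Finset.union_sdiff_of_subset hσL
    unfold dCellCx
    simp only [hU, Finset.smul_sum]
    apply Finset.sum_congr
    · apply Finset.filter_congr
      intro v _
      simp only [Finset.image_insert, Finset.insert_subset_iff]
      exact and_congr_right fun _ => and_congr_right fun _ =>
        ⟨fun h => ⟨h, hσL⟩, fun h => h.1⟩
    · intro v hv
      have hv' : v ∉ σ := by
        simp only [Finset.mem_filter] at hv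
        exact hv.2.1
      rw [smul_smul]
      congr 1
      rw [kappaSimp, kappaSimp, Finset.prod_insert hv']
      ring
end
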